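/- Fix d ≥ 1, a configuration ω : ℤ^d × ℕ → Prop, and an integer r ≥ 1. If there exist n ∈ ℕ and x ∈ ℤ^d such that x is wet at level n but x is not r-wet at level n, then there exist m ∈ ℕ and y ∈ ℤ^d with ‖y‖_∞ = r such that y is r-wet at level m. (This is the deterministic coupling claim between restricted and unrestricted oriented percolation used in the proof of Lemma 4: if the restricted set of wet sites ever differs from the unrestricted one, then the restricted process must reach the boundary of the box.) -/
import Mathlib


/-- `z` is an `ω`-open path from the origin to `(x, n)`: a nearest-neighbor sequence
`z 0 = 0, …, z n = x` all of whose sites `(z i, i)` are open. -/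
def IsOpenPath (d : ℕ) (ω : (Fin d → ℤ) → ℕ → Prop)
    (z : ℕ → Fin d → ℤ) (x : Fin d → ℤ) (n : ℕ) : Prop :=
  z 0 = 0 ∧ z n = x ∧ (∀ i < n, (∑ j, |z (i + 1) j - z i j|) = 1) ∧ ∀ i ≤ n, ω (z i) i

/-- `x` is wet at level `n`: there is an `ω`-open path to `(x, n)`. -/
def Wet (d : ℕ) (ω : (Fin d → ℤ) → ℕ → Prop) (x : Fin d → ℤ) (n : ℕ) : Prop :=
  ∃ z, IsOpenPath d ω z x n

/-- `x` is `r`-wet at level `n`: there is an `ω`-open path to `(x, n)` all of whose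
sites satisfy `‖z i‖_∞ ≤ r`. -/
def RWet (d : ℕ) (ω : (Fin d → ℤ) → ℕ → Prop) (r : ℕ) (x : Fin d → ℤ) (n : ℕ) : Prop :=
  ∃ z, IsOpenPath d ω z x n ∧ ∀ i ≤ n, ∀ j, |z i j| ≤ (r : ℤ)

/-- Coupling of restricted and unrestricted oriented percolation: if some site is wet
but not `r`-wet at some level, then the restricted process reaches the boundary of the
box, i.e. some site `y` with `‖y‖_∞ = r` is `r`-wet at some level `m`. -/
theorem restricted_percolation_reaches_boundary (d : ℕ) (hd : 1 ≤ d)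
    (ω : (Fin d → ℤ) → ℕ → Prop) (r : ℕ) (hr : 1 ≤ r)
    (h : ∃ (n : ℕ) (x : Fin d → ℤ), Wet d ω x n ∧ ¬ RWet d ω r x n) :
    ∃ (m : ℕ) (y : Fin d → ℤ),
      ((∀ j, |y j| ≤ (r : ℤ)) ∧ (∃ j, |y j| = (r : ℤ))) ∧ RWet d ω r y m := by
  classical
  obtain ⟨n, x, ⟨z, hz0, hzn, hstep, hopen⟩, hnr⟩ := h
  have hex : ∃ k, k ≤ n ∧ ∃ j, (r : ℤ) < |z k j| := by
    by_contra hc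
    push_neg at hc
    exact hnr ⟨z, ⟨hz0, hzn, hstep, hopen⟩, fun i hi j => hc i hi j⟩
  obtain ⟨hmn, j, hj⟩ := Nat.find_spec hex
  have hmin : ∀ i < Nat.find hex, ∀ j', |z i j'| ≤ (r : ℤ) := by
    intro i hi j'
    have := Nat.find_min hex hi
    push_neg at this
    exact this (by omega) j'
  obtain ⟨m', hM⟩ : ∃ m', Nat.find hex = m' + 1 := by
    refine ⟨Nat.find hex - 1, ?_⟩
    rcases Nat.eq_zero_or_pos (Nat.find hex) with h0 | h0
    · exfalso
      rw [h0, hz0] at hj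
      simp at hj
      omega
    · omega
  rw [hM] at hmn hj hmin
  have hm'n : m' < n := by omega
  -- step bound: |z (m'+1) j - z m' j| ≤ 1
  have hsum := hstep m' hm'n
  have hjle : |z (m' + 1) j - z m' j| ≤ 1 := by
    rw [← hsum]
    exact Finset.single_le_sum (f := fun j' => |z (m' + 1) j' - z m' j'|) (fun i _ => abs_nonneg _) (Finset.mem_univ j)
  have hble : ∀ j', |z m' j'| ≤ (r : ℤ) := hmin m' (Nat.lt_succ_self m')
  have hbeq : |z m' j| = (r : ℤ) := by
    have h1 : |z m' j| ≥ |z (m' + 1) j| - |z (m' + 1) j - z m' j| := by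
      have := abs_sub_abs_le_abs_sub (z (m' + 1) j) (z m' j)
      omega
    have := hble j
    omega
  refine ⟨m', z m', ⟨hble, j, hbeq⟩, z, ⟨hz0, rfl, fun i hi => hstep i (by omega),
    fun i hi => hopen i (by omega)⟩, fun i hi j' => hmin i (by omega) j'⟩
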